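/- arXiv:2204.04829 — 2 statements merged into one kernel-verified Lean document; each statement's English description precedes it below -/
import Mathlib

section
/- Let n ≥ 2. There exists a constant C > 0 depending only on n with the following property: for all points M, y ∈ ℝⁿ, all radii 0 < ρ ≤ R with B_ρ(y) ⊆ B_R(M), and every continuously differentiable function u : ℝⁿ → ℂ that vanishes on the closed ball of radius ρ centered at y, one has ∫_{B_R(M)} |u(x)|² dx ≤ C · R² · (R/ρ)^{n−2} · κ · ∫_{B_R(M)} |∇u(x)|² dx, where κ = log(R/ρ) + 1 if n = 2 and κ = 1 if n ≥ 3. -/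
open MeasureTheory Metric

section AuxPoincare

open Set
open scoped ENNReal

namespace AuxPoincare

variable {E : Type*} [NormedAddCommGroup E] [NormedSpace ℝ E]

lemma ray_bound (u : E → ℂ) (hu : ContDiff ℝ 1 u) (y ω : E) (hω : ‖ω‖ = 1)
    (m : ℕ) (ρ r : ℝ) (hρ : 0 < ρ) (hρr : ρ ≤ r)
    (hzero : u (y + ρ • ω) = 0) :
    ENNReal.ofReal (‖u (y + r • ω)‖ ^ 2) ≤
      (∫⁻ t in Ioc ρ r, ENNReal.ofReal ((t ^ m)⁻¹)) *
        ∫⁻ t in Ioc ρ r, ENNReal.ofReal (t ^ m * ‖fderiv ℝ u (y + t • ω)‖ ^ 2) := by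
  set h : ℝ → ℝ := fun t => ‖fderiv ℝ u (y + t • ω)‖ with hh
  have hline : Continuous fun t : ℝ => y + t • ω := by continuity
  have hc : Continuous fun t : ℝ => fderiv ℝ u (y + t • ω) :=
    (hu.continuous_fderiv one_ne_zero).comp hline
  have hch : Continuous h := hc.norm
  have hasDeriv : ∀ t : ℝ, HasDerivAt (fun s => u (y + s • ω))
      ((fderiv ℝ u (y + t • ω)) ω) t := by
    intro t
    have h1 : HasDerivAt (fun s : ℝ => y + s • ω) ω t := by
      simpa using ((hasDerivAt_id t).smul_const ω).const_add y
    have h2 := (hu.differentiable one_ne_zero (y + t • ω)).hasFDerivAt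
    exact h2.comp_hasDerivAt t h1
  have key : u (y + r • ω) = ∫ t in ρ..r, (fderiv ℝ u (y + t • ω)) ω := by
    rw [intervalIntegral.integral_eq_sub_of_hasDerivAt (fun t _ => hasDeriv t)
      ((hc.clm_apply continuous_const).intervalIntegrable ρ r), hzero, sub_zero]
  have hnorm : ‖u (y + r • ω)‖ ≤ ∫ t in Ioc ρ r, h t := by
    rw [key, ← intervalIntegral.integral_of_le hρr]
    refine (intervalIntegral.norm_integral_le_integral_norm hρr).trans ?_
    refine intervalIntegral.integral_mono_on hρr
      ((hc.clm_apply continuous_const).norm.intervalIntegrable ρ r)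
      (hch.intervalIntegrable ρ r) ?_
    intro t _
    simpa [hω] using (fderiv ℝ u (y + t • ω)).le_opNorm ω
  have hofreal : ENNReal.ofReal (‖u (y + r • ω)‖) ≤ ∫⁻ t in Ioc ρ r, ENNReal.ofReal (h t) := by
    refine le_trans (ENNReal.ofReal_le_ofReal hnorm) ?_
    rw [← ofReal_integral_eq_lintegral_ofReal (hch.integrableOn_Ioc)
      (ae_of_all _ fun t => norm_nonneg _)]
  set P := ∫⁻ t in Ioc ρ r, ENNReal.ofReal ((t ^ m)⁻¹) with hP
  set Q := ∫⁻ t in Ioc ρ r, ENNReal.ofReal (t ^ m * h t ^ 2) with hQ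
  have CS : (∫⁻ t in Ioc ρ r, ENNReal.ofReal (h t)) ≤ P ^ ((1:ℝ)/2) * Q ^ ((1:ℝ)/2) := by
    have hpq : Real.HolderConjugate 2 2 := Real.holderConjugate_iff.mpr ⟨one_lt_two, by norm_num⟩
    have hf : AEMeasurable (fun t => ENNReal.ofReal (Real.sqrt ((t ^ m)⁻¹)))
        (volume.restrict (Ioc ρ r)) := by fun_prop
    have hg : AEMeasurable (fun t => ENNReal.ofReal (Real.sqrt (t ^ m) * h t))
        (volume.restrict (Ioc ρ r)) := by
      exact (((continuous_pow m).sqrt.mul hch).measurable.ennreal_ofReal).aemeasurable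
    have heq : ∫⁻ t in Ioc ρ r, ENNReal.ofReal (h t)
        = ∫⁻ t in Ioc ρ r, ((fun t => ENNReal.ofReal (Real.sqrt ((t ^ m)⁻¹))) *
            fun t => ENNReal.ofReal (Real.sqrt (t ^ m) * h t)) t := by
      refine setLIntegral_congr_fun measurableSet_Ioc ?_
      intro t ht
      have htpos : (0:ℝ) < t := hρ.trans ht.1
      have hw : (0:ℝ) < t ^ m := pow_pos htpos m
      have hsq : Real.sqrt (t ^ m) ≠ 0 := by positivity
      simp only [Pi.mul_apply, ← ENNReal.ofReal_mul (Real.sqrt_nonneg _)]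
      congr 1
      rw [Real.sqrt_inv, ← mul_assoc, inv_mul_cancel₀ hsq, one_mul]
    rw [heq]
    refine (ENNReal.lintegral_mul_le_Lp_mul_Lq _ hpq hf hg).trans_eq ?_
    congr 1
    · congr 1
      refine setLIntegral_congr_fun measurableSet_Ioc ?_
      intro t ht
      have htpos : (0:ℝ) < t := hρ.trans ht.1
      have hw : (0:ℝ) ≤ (t ^ m)⁻¹ := by positivity
      beta_reduce
      rw [ENNReal.ofReal_rpow_of_nonneg (Real.sqrt_nonneg _) (by norm_num : (0:ℝ) ≤ 2)]
      congr 1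
      rw [show ((2:ℝ)) = ((2:ℕ):ℝ) by norm_num, Real.rpow_natCast, Real.sq_sqrt hw]
    · congr 1
      refine setLIntegral_congr_fun measurableSet_Ioc ?_
      intro t ht
      have htpos : (0:ℝ) < t := hρ.trans ht.1
      have hw : (0:ℝ) ≤ t ^ m := by positivity
      beta_reduce
      rw [ENNReal.ofReal_rpow_of_nonneg (by positivity) (by norm_num : (0:ℝ) ≤ 2)]
      congr 1
      rw [show ((2:ℝ)) = ((2:ℕ):ℝ) by norm_num, Real.rpow_natCast]
      rw [mul_pow, sq, sq, Real.mul_self_sqrt hw]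
  have hhalf : ∀ x : ℝ≥0∞, (x ^ ((1:ℝ)/2)) ^ (2:ℕ) = x := fun x => by
    rw [← ENNReal.rpow_natCast (x ^ ((1:ℝ)/2)) 2, ← ENNReal.rpow_mul]
    norm_num
  calc ENNReal.ofReal (‖u (y + r • ω)‖ ^ 2)
      = ENNReal.ofReal (‖u (y + r • ω)‖) ^ (2:ℕ) := ENNReal.ofReal_pow (norm_nonneg _) 2
    _ ≤ (P ^ ((1:ℝ)/2) * Q ^ ((1:ℝ)/2)) ^ (2:ℕ) := by
        gcongr
        exact hofreal.trans CS
    _ = P * Q := by rw [mul_pow, hhalf, hhalf]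

variable [MeasurableSpace E] [BorelSpace E] [FiniteDimensional ℝ E] [Nontrivial E]
  (μ : Measure E) [μ.IsAddHaarMeasure]

lemma polar_lintegral (H : E → ℝ≥0∞) (hH : Measurable H) :
    ∫⁻ x, H x ∂μ = ∫⁻ p : sphere (0:E) 1 × Ioi (0:ℝ),
      H ((p.2 : ℝ) • (p.1 : E)) ∂(μ.toSphere.prod
        (Measure.volumeIoiPow (Module.finrank ℝ E - 1))) := by
  have hms : MeasurableSet ({0}ᶜ : Set E) := (measurableSet_singleton 0).compl
  have MP := μ.measurePreserving_homeomorphUnitSphereProd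
  have hmeas : Measurable fun p : sphere (0:E) 1 × Ioi (0:ℝ) => H ((p.2 : ℝ) • (p.1 : E)) := by
    apply hH.comp
    exact (measurable_subtype_coe.comp measurable_snd).smul
      (measurable_subtype_coe.comp measurable_fst)
  calc ∫⁻ x, H x ∂μ = ∫⁻ x in {0}ᶜ, H x ∂μ := by
        rw [MeasureTheory.restrict_compl_singleton]
    _ = ∫⁻ x : ({0}ᶜ : Set E), H x ∂(μ.comap Subtype.val) :=
        (lintegral_subtype_comap hms _).symm
    _ = ∫⁻ p : sphere (0:E) 1 × Ioi (0:ℝ), H ((p.2 : ℝ) • (p.1 : E))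
          ∂(μ.toSphere.prod (Measure.volumeIoiPow (Module.finrank ℝ E - 1))) := by
        rw [← MP.lintegral_comp hmeas]
        congr 1
        ext x
        have hx : (x : E) ≠ 0 := x.2
        simp [smul_smul, mul_inv_cancel₀ (norm_ne_zero_iff.2 hx)]

lemma lintegral_volumeIoiPow (m : ℕ) (f : ℝ → ℝ≥0∞) (hf : Measurable f) :
    ∫⁻ r : Ioi (0:ℝ), f r ∂(Measure.volumeIoiPow m)
      = ∫⁻ r in Ioi (0:ℝ), ENNReal.ofReal (r ^ m) * f r := by
  rw [Measure.volumeIoiPow, lintegral_withDensity_eq_lintegral_mul _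
    (by exact (measurable_subtype_coe.pow_const m).ennreal_ofReal)
    (show Measurable fun r : Ioi (0:ℝ) => f r from hf.comp measurable_subtype_coe)]
  exact lintegral_subtype_comap measurableSet_Ioi (fun r => ENNReal.ofReal (r ^ m) * f r)

end AuxPoincare

end AuxPoincare

set_option maxHeartbeats 2000000 in
/-- Core of Lemma 3.4: Poincaré-type inequality for functions vanishing on a
small interior ball. -/
theorem stmt0 (n : ℕ) (hn : 2 ≤ n) :
    ∃ C : ℝ, 0 < C ∧
      ∀ (M y : EuclideanSpace ℝ (Fin n)) (ρ R : ℝ), 0 < ρ → ρ ≤ R →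
        ball y ρ ⊆ ball M R →
        ∀ u : EuclideanSpace ℝ (Fin n) → ℂ, ContDiff ℝ 1 u →
          (∀ x ∈ closedBall y ρ, u x = 0) →
          ∫ x in ball M R, ‖u x‖ ^ 2 ≤
            C * R ^ 2 * (R / ρ) ^ (n - 2) *
              (if n = 2 then Real.log (R / ρ) + 1 else 1) *
              ∫ x in ball M R, ‖fderiv ℝ u x‖ ^ 2 := by
  classical
  refine ⟨2 ^ (n + 2), by positivity, ?_⟩
  intro M y ρ R hρ hρR hsub u hu hvanish
  haveI : Nontrivial (EuclideanSpace ℝ (Fin n)) :=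
    Module.nontrivial_of_finrank_pos (R := ℝ) (by rw [finrank_euclideanSpace_fin]; omega)
  have hR : 0 < R := lt_of_lt_of_le hρ hρR
  have hyD : y ∈ ball M R := hsub (mem_ball_self hρ)
  have hρ2R : ρ ≤ 2 * R := by linarith
  have hDsub : ball M R ⊆ ball y (2 * R) := by
    intro x hx
    rw [mem_ball] at hx ⊢
    have hyM : dist y M < R := mem_ball.1 hyD
    calc dist x y ≤ dist x M + dist M y := dist_triangle x M y
      _ < R + R := add_lt_add hx (by rw [dist_comm]; exact hyM)
      _ = 2 * R := by ring
  have hfc : Continuous fun z : EuclideanSpace ℝ (Fin n) => ‖fderiv ℝ u z‖ ^ 2 :=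
    ((hu.continuous_fderiv one_ne_zero).norm.pow 2)
  -- definitions
  set Fd : EuclideanSpace ℝ (Fin n) → ENNReal :=
    (ball M R).indicator fun z => ENNReal.ofReal (‖fderiv ℝ u z‖ ^ 2) with hFd
  have hFdmeas : Measurable Fd :=
    (hfc.measurable.ennreal_ofReal).indicator measurableSet_ball
  set dir : EuclideanSpace ℝ (Fin n) → EuclideanSpace ℝ (Fin n) :=
    fun v => ‖v‖⁻¹ • v with hdir
  have hdirmeas : Measurable dir := (measurable_norm.inv).smul measurable_id
  set g : EuclideanSpace ℝ (Fin n) → ENNReal := fun x =>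
    ∫⁻ t in Set.Ioc ρ (2 * R), ENNReal.ofReal (t ^ (n - 1)) * Fd (y + t • dir (x - y)) with hg
  have hgmeas : Measurable g := by
    apply Measurable.lintegral_prod_right
      (f := fun x t => ENNReal.ofReal (t ^ (n - 1)) * Fd (y + t • dir (x - y)))
    exact ((measurable_snd.pow_const _).ennreal_ofReal).mul
      (hFdmeas.comp (measurable_const.add (measurable_snd.smul
        (hdirmeas.comp (measurable_fst.sub measurable_const)))))
  set G : EuclideanSpace ℝ (Fin n) → ENNReal := fun z =>
    ∫⁻ t in Set.Ioc ρ (2 * R), ENNReal.ofReal (t ^ (n - 1)) * Fd (y + t • dir z) with hG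
  have hGmeas : Measurable G := by
    apply Measurable.lintegral_prod_right
      (f := fun z t => ENNReal.ofReal (t ^ (n - 1)) * Fd (y + t • dir z))
    exact ((measurable_snd.pow_const _).ennreal_ofReal).mul
      (hFdmeas.comp (measurable_const.add (measurable_snd.smul
        (hdirmeas.comp measurable_fst))))
  set A : ENNReal := ∫⁻ t in Set.Ioc ρ (2 * R), ENNReal.ofReal ((t ^ (n - 1))⁻¹) with hA
  -- pointwise bound
  have hpt : ∀ x ∈ ball M R, ENNReal.ofReal (‖u x‖ ^ 2) ≤ A * g x := by
    intro x hx
    by_cases hxy : dist x y ≤ ρ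
    · have h0 : u x = 0 := hvanish x (mem_closedBall.2 hxy)
      simp [h0]
    push_neg at hxy
    have hxyn : ρ < ‖x - y‖ := by rwa [← dist_eq_norm]
    have hr0 : (0:ℝ) < ‖x - y‖ := lt_trans hρ hxyn
    have hxne : x - y ≠ 0 := by
      intro h0
      rw [h0, norm_zero] at hr0; exact lt_irrefl 0 hr0
    have h2Rb : ‖x - y‖ ≤ 2 * R := by
      rw [← dist_eq_norm]
      exact le_of_lt (mem_ball.1 (hDsub hx))
    have hω : ‖dir (x - y)‖ = 1 := by
      rw [hdir]
      simp only
      rw [norm_smul, norm_inv, norm_norm, inv_mul_cancel₀ (norm_ne_zero_iff.2 hxne)]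
    have hxrep : x = y + ‖x - y‖ • dir (x - y) := by
      rw [hdir]
      simp only
      rw [smul_smul, mul_inv_cancel₀ (ne_of_gt hr0), one_smul]
      abel
    have hzero0 : u (y + ρ • dir (x - y)) = 0 := by
      apply hvanish
      rw [mem_closedBall, dist_eq_norm, add_sub_cancel_left, norm_smul, hω, mul_one,
        Real.norm_eq_abs, abs_of_pos hρ]
    have hray := AuxPoincare.ray_bound u hu y (dir (x - y)) hω (n - 1) ρ ‖x - y‖ hρ (le_of_lt hxyn) hzero0
    rw [← hxrep] at hray
    refine le_trans hray (mul_le_mul' ?_ ?_)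
    · exact lintegral_mono_set (Set.Ioc_subset_Ioc_right h2Rb)
    · refine le_trans ?_ (lintegral_mono_set (Set.Ioc_subset_Ioc_right h2Rb))
      refine setLIntegral_mono (by
        exact ((measurable_id.pow_const _).ennreal_ofReal).mul
          (hFdmeas.comp (measurable_const.add (measurable_id.smul measurable_const)))) ?_
      intro t ht
      have htpos : (0:ℝ) < t := lt_trans hρ ht.1
      have hc0 : 0 < t / ‖x - y‖ := div_pos htpos hr0
      have hc1 : t / ‖x - y‖ ≤ 1 := div_le_one_of_le₀ ht.2 hr0.le
      have hptmem : y + t • dir (x - y) ∈ ball M R := by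
        have hseg : y + t • dir (x - y) = (1 - t / ‖x - y‖) • y + (t / ‖x - y‖) • x := by
          rw [hdir]
          simp only
          rw [smul_smul, ← div_eq_mul_inv, smul_sub, sub_smul, one_smul]
          abel
        rw [hseg]
        exact (convex_ball M R) hyD hx (by linarith) (le_of_lt hc0) (by ring)
      rw [ENNReal.ofReal_mul (by positivity), hFd, Set.indicator_of_mem hptmem]
  -- main chain in ℝ≥0∞
  have step1 : (∫⁻ x in ball M R, ENNReal.ofReal (‖u x‖ ^ 2))
      ≤ A * ∫⁻ x in ball y (2 * R), g x := by
    calc (∫⁻ x in ball M R, ENNReal.ofReal (‖u x‖ ^ 2))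
        ≤ ∫⁻ x in ball M R, A * g x := setLIntegral_mono (measurable_const.mul hgmeas) hpt
      _ = A * ∫⁻ x in ball M R, g x := lintegral_const_mul A hgmeas
      _ ≤ A * ∫⁻ x in ball y (2 * R), g x := mul_le_mul_right (lintegral_mono_set hDsub) A
  have hfr : Module.finrank ℝ (EuclideanSpace ℝ (Fin n)) = n := finrank_euclideanSpace_fin
  have hJ : (∫⁻ x in ball y (2 * R), g x)
      = (∫⁻ ω : sphere (0 : EuclideanSpace ℝ (Fin n)) 1, G ω
          ∂(volume : Measure (EuclideanSpace ℝ (Fin n))).toSphere)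
        * ∫⁻ r : Set.Ioi (0:ℝ), (Set.Iio (2 * R)).indicator 1 (r:ℝ)
            ∂(Measure.volumeIoiPow (n - 1)) := by
    rw [← lintegral_indicator measurableSet_ball]
    rw [← lintegral_add_left_eq_self (fun z => (ball y (2 * R)).indicator g z) y]
    have e1 : (fun z => (ball y (2 * R)).indicator g (y + z))
        = (ball (0 : EuclideanSpace ℝ (Fin n)) (2 * R)).indicator G := by
      funext z
      have hmem : y + z ∈ ball y (2 * R) ↔ z ∈ ball (0 : EuclideanSpace ℝ (Fin n)) (2 * R) := by
        rw [mem_ball, mem_ball, dist_eq_norm, dist_eq_norm, add_sub_cancel_left, sub_zero]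
      by_cases hz : z ∈ ball (0 : EuclideanSpace ℝ (Fin n)) (2 * R)
      · rw [Set.indicator_of_mem hz, Set.indicator_of_mem (hmem.2 hz)]
        simp only [hg, hG, add_sub_cancel_left]
      · rw [Set.indicator_of_notMem hz, Set.indicator_of_notMem (fun hm => hz (hmem.1 hm))]
    rw [e1, AuxPoincare.polar_lintegral volume _ (hGmeas.indicator measurableSet_ball), hfr]
    have e2 : (fun p : sphere (0 : EuclideanSpace ℝ (Fin n)) 1 × Set.Ioi (0:ℝ) =>
        (ball (0 : EuclideanSpace ℝ (Fin n)) (2 * R)).indicator G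
          ((p.2:ℝ) • (p.1 : EuclideanSpace ℝ (Fin n))))
        = fun p => G (p.1 : EuclideanSpace ℝ (Fin n)) * (Set.Iio (2 * R)).indicator 1 (p.2:ℝ) := by
      funext p
      obtain ⟨ω, r⟩ := p
      have hr0 : (0:ℝ) < r := r.2
      have hω1 : ‖(ω : EuclideanSpace ℝ (Fin n))‖ = 1 := by
        have h := ω.2
        rwa [mem_sphere_zero_iff_norm] at h
      have hnrm : ‖(r:ℝ) • (ω : EuclideanSpace ℝ (Fin n))‖ = (r:ℝ) := by
        rw [norm_smul, hω1, mul_one, Real.norm_eq_abs, abs_of_pos hr0]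
      have hdir_eq : dir ((r:ℝ) • (ω : EuclideanSpace ℝ (Fin n)))
          = (ω : EuclideanSpace ℝ (Fin n)) := by
        simp only [hdir, hnrm, smul_smul]
        rw [inv_mul_cancel₀ (ne_of_gt hr0), one_smul]
      have hdirω : dir (ω : EuclideanSpace ℝ (Fin n)) = (ω : EuclideanSpace ℝ (Fin n)) := by
        simp only [hdir, hω1, inv_one, one_smul]
      have hGsm : G ((r:ℝ) • (ω : EuclideanSpace ℝ (Fin n))) = G (ω : EuclideanSpace ℝ (Fin n)) := by
        simp only [hG, hdir_eq, hdirω]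
      by_cases hlt : (r:ℝ) < 2 * R
      · rw [Set.indicator_of_mem (by rw [mem_ball, dist_eq_norm, sub_zero, hnrm]; exact hlt),
          Set.indicator_of_mem (by exact hlt : (r:ℝ) ∈ Set.Iio (2 * R)), hGsm, Pi.one_apply, mul_one]
      · rw [Set.indicator_of_notMem (by rw [mem_ball, dist_eq_norm, sub_zero, hnrm]; exact hlt),
          Set.indicator_of_notMem (by exact hlt : (r:ℝ) ∉ Set.Iio (2 * R)), mul_zero]
    rw [e2]
    exact lintegral_prod_mul ((hGmeas.comp measurable_subtype_coe).aemeasurable)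
      (((measurable_one.indicator measurableSet_Iio).comp measurable_subtype_coe).aemeasurable)
  have hV : (∫⁻ r : Set.Ioi (0:ℝ), (Set.Iio (2 * R)).indicator 1 (r:ℝ)
        ∂(Measure.volumeIoiPow (n - 1)))
      = ENNReal.ofReal ((2 * R) ^ n / n) := by
    rw [AuxPoincare.lintegral_volumeIoiPow (n - 1) _ (measurable_one.indicator measurableSet_Iio)]
    have e3 : (fun r : ℝ => ENNReal.ofReal (r ^ (n - 1)) * (Set.Iio (2 * R)).indicator 1 r)
        = (Set.Iio (2 * R)).indicator fun r => ENNReal.ofReal (r ^ (n - 1)) := by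
      funext r
      by_cases hr : r ∈ Set.Iio (2 * R)
      · rw [Set.indicator_of_mem hr, Set.indicator_of_mem hr, Pi.one_apply, mul_one]
      · rw [Set.indicator_of_notMem hr, Set.indicator_of_notMem hr, mul_zero]
    rw [e3, lintegral_indicator measurableSet_Iio, Measure.restrict_restrict measurableSet_Iio,
      Set.Iio_inter_Ioi]
    rw [← ofReal_integral_eq_lintegral_ofReal
      (((continuous_pow (n - 1)).integrableOn_Ioc).mono_set Set.Ioo_subset_Ioc_self)
      (((ae_restrict_mem measurableSet_Ioo).mono fun r hr => le_of_lt (pow_pos hr.1 _)))]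
    congr 1
    rw [← MeasureTheory.integral_Ioc_eq_integral_Ioo,
      ← intervalIntegral.integral_of_le (by positivity : (0:ℝ) ≤ 2 * R),
      integral_pow]
    have hne : n - 1 + 1 = n := by omega
    have hcast : ((n - 1 : ℕ) : ℝ) + 1 = (n : ℝ) := by
      have h1 : (1:ℕ) ≤ n := by omega
      push_cast [Nat.cast_sub h1]
      ring
    rw [hne, hcast, zero_pow (by omega : n ≠ 0), sub_zero]
  set K : EuclideanSpace ℝ (Fin n) → ENNReal := fun z =>
    (Set.Ioc ρ (2 * R)).indicator 1 ‖z‖ * Fd (y + z) with hK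
  have hKmeas : Measurable K :=
    (((measurable_one.indicator measurableSet_Ioc).comp measurable_norm)).mul
      (hFdmeas.comp (measurable_const.add measurable_id))
  have hS : (∫⁻ z, K z)
      = ∫⁻ ω : sphere (0 : EuclideanSpace ℝ (Fin n)) 1, G ω
          ∂(volume : Measure (EuclideanSpace ℝ (Fin n))).toSphere := by
    rw [AuxPoincare.polar_lintegral volume K hKmeas, hfr]
    have hmeasp : Measurable fun p : sphere (0 : EuclideanSpace ℝ (Fin n)) 1 × Set.Ioi (0:ℝ) =>
        K ((p.2:ℝ) • (p.1 : EuclideanSpace ℝ (Fin n))) :=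
      hKmeas.comp ((measurable_subtype_coe.comp measurable_snd).smul
        (measurable_subtype_coe.comp measurable_fst))
    rw [lintegral_prod _ hmeasp.aemeasurable]
    refine lintegral_congr fun ω => ?_
    have hω1 : ‖(ω : EuclideanSpace ℝ (Fin n))‖ = 1 := by
      have h := ω.2
      rwa [mem_sphere_zero_iff_norm] at h
    rw [AuxPoincare.lintegral_volumeIoiPow (n - 1)
      (fun s : ℝ => K (s • (ω : EuclideanSpace ℝ (Fin n))))
      (hKmeas.comp (measurable_id.smul measurable_const))]
    have e4 : ∀ s ∈ Set.Ioi (0:ℝ),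
        ENNReal.ofReal (s ^ (n - 1)) * K (s • (ω : EuclideanSpace ℝ (Fin n)))
        = (Set.Ioc ρ (2 * R)).indicator
            (fun s => ENNReal.ofReal (s ^ (n - 1))
              * Fd (y + s • (ω : EuclideanSpace ℝ (Fin n)))) s := by
      intro s hs
      have hsn : ‖s • (ω : EuclideanSpace ℝ (Fin n))‖ = s := by
        rw [norm_smul, hω1, mul_one, Real.norm_eq_abs, abs_of_pos hs]
      by_cases hm : s ∈ Set.Ioc ρ (2 * R)
      · rw [Set.indicator_of_mem hm, hK]
        simp only
        rw [hsn, Set.indicator_of_mem hm, Pi.one_apply, one_mul]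
      · rw [Set.indicator_of_notMem hm, hK]
        simp only
        rw [hsn, Set.indicator_of_notMem hm, zero_mul, mul_zero]
    rw [setLIntegral_congr_fun measurableSet_Ioi e4]
    rw [lintegral_indicator measurableSet_Ioc, Measure.restrict_restrict measurableSet_Ioc,
      (show Set.Ioc ρ (2 * R) ∩ Set.Ioi 0 = Set.Ioc ρ (2 * R) from
        Set.inter_eq_left.2 (fun s hs => lt_trans hρ hs.1))]
    have hdirω : dir (ω : EuclideanSpace ℝ (Fin n)) = (ω : EuclideanSpace ℝ (Fin n)) := by
      simp only [hdir, hω1, inv_one, one_smul]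
    simp only [hG, hdirω]
  have hSle : (∫⁻ z, K z) ≤ ∫⁻ z in ball M R, ENNReal.ofReal (‖fderiv ℝ u z‖ ^ 2) := by
    calc (∫⁻ z, K z) ≤ ∫⁻ z, Fd (y + z) := by
          refine lintegral_mono fun z => ?_
          rw [hK]
          simp only
          by_cases hm : ‖z‖ ∈ Set.Ioc ρ (2 * R)
          · rw [Set.indicator_of_mem hm, Pi.one_apply, one_mul]
          · rw [Set.indicator_of_notMem hm, zero_mul]
            exact zero_le
      _ = ∫⁻ z, Fd z := lintegral_add_left_eq_self Fd y
      _ = ∫⁻ z in ball M R, ENNReal.ofReal (‖fderiv ℝ u z‖ ^ 2) := by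
          rw [hFd, lintegral_indicator measurableSet_ball]
  set I : ENNReal := ∫⁻ z in ball M R, ENNReal.ofReal (‖fderiv ℝ u z‖ ^ 2) with hI
  have hchain : (∫⁻ x in ball M R, ENNReal.ofReal (‖u x‖ ^ 2))
      ≤ (A * ENNReal.ofReal ((2 * R) ^ n / n)) * I := by
    refine step1.trans ?_
    rw [hJ, hV, ← hS]
    rw [mul_comm (∫⁻ z, K z) (ENNReal.ofReal ((2 * R) ^ n / n)), ← mul_assoc]
    exact mul_le_mul_right hSle _
  -- evaluation of A
  have hintA : IntegrableOn (fun t : ℝ => (t ^ (n - 1))⁻¹) (Set.Ioc ρ (2 * R)) := by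
    refine (ContinuousOn.integrableOn_compact isCompact_Icc ?_).mono_set Set.Ioc_subset_Icc_self
    refine ContinuousOn.inv₀ (continuous_pow (n - 1)).continuousOn fun t ht => ?_
    exact ne_of_gt (pow_pos (lt_of_lt_of_le hρ ht.1) _)
  have hAeq : A = ENNReal.ofReal (∫ t in Set.Ioc ρ (2 * R), (t ^ (n - 1))⁻¹) := by
    rw [hA, ← ofReal_integral_eq_lintegral_ofReal hintA
      ((ae_restrict_mem measurableSet_Ioc).mono fun t ht => by
        have h0 : (0:ℝ) < t := lt_trans hρ ht.1
        positivity)]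
  have haInt : (∫ t in Set.Ioc ρ (2 * R), (t ^ (n - 1))⁻¹)
      = ∫ t in ρ..(2 * R), (t ^ (n - 1))⁻¹ := (intervalIntegral.integral_of_le hρ2R).symm
  have haNonneg : (0:ℝ) ≤ ∫ t in Set.Ioc ρ (2 * R), (t ^ (n - 1))⁻¹ := by
    refine setIntegral_nonneg measurableSet_Ioc fun t ht => ?_
    have h0 : (0:ℝ) < t := lt_trans hρ ht.1
    positivity
  have hLpos : (0:ℝ) ≤ Real.log (R / ρ) := Real.log_nonneg ((one_le_div hρ).2 hρR)
  have h0mem : (0:ℝ) ∉ Set.uIcc ρ (2 * R) := by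
    rw [Set.uIcc_of_le hρ2R]
    intro h
    exact absurd h.1 (not_le.2 hρ)
  have hCC : (0:ℝ) ≤ 2 ^ (n + 2) * R ^ 2 * (R / ρ) ^ (n - 2)
      * (if n = 2 then Real.log (R / ρ) + 1 else 1) := by
    have hd : (0:ℝ) ≤ R / ρ := le_of_lt (div_pos hR hρ)
    split_ifs <;> positivity
  have hAVle : A * ENNReal.ofReal ((2 * R) ^ n / n)
      ≤ ENNReal.ofReal (2 ^ (n + 2) * R ^ 2 * (R / ρ) ^ (n - 2)
          * (if n = 2 then Real.log (R / ρ) + 1 else 1)) := by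
    rw [hAeq, ← ENNReal.ofReal_mul haNonneg]
    refine ENNReal.ofReal_le_ofReal ?_
    rw [haInt]
    by_cases hn2 : n = 2
    · subst hn2
      have hval : (∫ t in ρ..(2 * R), (t ^ (2 - 1 : ℕ))⁻¹) = Real.log ((2 * R) / ρ) := by
        have h11 : (2 - 1 : ℕ) = 1 := by norm_num
        simp only [h11, pow_one]
        exact _root_.integral_inv h0mem
      rw [hval, if_pos rfl]
      have hlog2 : Real.log (2 * R / ρ) = Real.log 2 + Real.log (R / ρ) := by
        rw [mul_div_assoc, Real.log_mul two_ne_zero (ne_of_gt (div_pos hR hρ))]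
      rw [hlog2]
      have h2le : Real.log 2 ≤ 1 := by
        have := Real.log_le_sub_one_of_pos (by norm_num : (0:ℝ) < 2)
        linarith
      have h22 : ((2:ℕ) - 2 : ℕ) = 0 := by norm_num
      rw [h22, pow_zero]
      have hRsq : (0:ℝ) ≤ R ^ 2 := sq_nonneg R
      nlinarith [mul_nonneg hRsq hLpos, mul_le_mul_of_nonneg_right h2le hRsq,
        mul_nonneg hRsq (Real.log_nonneg (by norm_num : (1:ℝ) ≤ 2))]
    · rw [if_neg hn2, mul_one]
      obtain ⟨m, rfl⟩ : ∃ m, n = m + 3 := ⟨n - 3, by omega⟩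
      have hs1 : (m + 3 - 1 : ℕ) = m + 2 := by omega
      have hs2 : (m + 3 - 2 : ℕ) = m + 1 := by omega
      rw [hs1, hs2]
      have hzrw : ∀ t : ℝ, (t ^ (m + 2 : ℕ))⁻¹ = t ^ (-((m + 2 : ℕ) : ℤ)) := fun t => by
        rw [zpow_neg, zpow_natCast]
      simp only [hzrw]
      have hne1 : -((m + 2 : ℕ) : ℤ) ≠ -1 := by push_cast; omega
      have hval : (∫ t in ρ..(2 * R), t ^ (-((m + 2 : ℕ) : ℤ)))
          = ((ρ ^ (m + 1))⁻¹ - ((2 * R) ^ (m + 1))⁻¹) / (m + 1 : ℝ) := by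
        rw [integral_zpow (Or.inr ⟨hne1, h0mem⟩)]
        have e1 : ∀ x : ℝ, x ^ ((-((m + 2 : ℕ) : ℤ)) + 1) = (x ^ (m + 1 : ℕ))⁻¹ := fun x => by
          rw [show (-((m + 2 : ℕ) : ℤ) + 1) = -((m + 1 : ℕ) : ℤ) by push_cast; ring,
            zpow_neg, zpow_natCast]
        rw [e1, e1]
        push_cast
        rw [show (-((m:ℝ) + 2) + 1) = -((m:ℝ) + 1) by ring]
        rw [div_neg, ← neg_div, neg_sub]
      rw [hval]
      have hρpow : (0:ℝ) < ρ ^ (m + 1) := pow_pos hρ _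
      have h2Rpow : (0:ℝ) < (2 * R) ^ (m + 1) := by positivity
      have hmono : ((2 * R) ^ (m + 1))⁻¹ ≤ (ρ ^ (m + 1))⁻¹ := by
        apply inv_anti₀ hρpow
        exact pow_le_pow_left₀ hρ.le hρ2R (m + 1)
      have hnum0 : (0:ℝ) ≤ (ρ ^ (m + 1))⁻¹ - ((2 * R) ^ (m + 1))⁻¹ := by linarith
      have hb1 : ((ρ ^ (m + 1))⁻¹ - ((2 * R) ^ (m + 1))⁻¹) / (m + 1 : ℝ) ≤ (ρ ^ (m + 1))⁻¹ := by
        refine le_trans (div_le_self hnum0 (by push_cast; linarith [Nat.cast_nonneg (α := ℝ) m])) ?_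
        have : (0:ℝ) ≤ ((2 * R) ^ (m + 1))⁻¹ := by positivity
        linarith
      have hb2 : ((2 * R) ^ (m + 3 : ℕ) / ((m + 3 : ℕ) : ℝ)) ≤ (2 * R) ^ (m + 3 : ℕ) := by
        refine div_le_self (by positivity) ?_
        push_cast
        linarith [Nat.cast_nonneg (α := ℝ) m]
      calc ((ρ ^ (m + 1))⁻¹ - ((2 * R) ^ (m + 1))⁻¹) / (m + 1 : ℝ)
            * ((2 * R) ^ (m + 3 : ℕ) / ((m + 3 : ℕ) : ℝ))
          ≤ (ρ ^ (m + 1))⁻¹ * (2 * R) ^ (m + 3 : ℕ) := by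
            refine mul_le_mul hb1 hb2 (by positivity) (by positivity)
        _ = 2 ^ (m + 3) * R ^ 2 * (R ^ (m + 1) * (ρ ^ (m + 1))⁻¹) := by
            rw [mul_pow, pow_add (R) (m + 1) 2]
            ring
        _ ≤ 2 ^ (m + 3 + 2) * R ^ 2 * (R ^ (m + 1) * (ρ ^ (m + 1))⁻¹) := by
            refine mul_le_mul_of_nonneg_right (mul_le_mul_of_nonneg_right ?_ (sq_nonneg R))
              (by positivity)
            exact pow_le_pow_right₀ (by norm_num : (1:ℝ) ≤ 2) (by omega)
        _ = 2 ^ (m + 3 + 2) * R ^ 2 * (R / ρ) ^ (m + 1) := by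
            rw [div_pow, div_eq_mul_inv]
  -- final assembly
  have hint2 : IntegrableOn (fun z : EuclideanSpace ℝ (Fin n) => ‖fderiv ℝ u z‖ ^ 2)
      (ball M R) := by
    exact (hfc.continuousOn.integrableOn_compact (isCompact_closedBall M R)).mono_set
      ball_subset_closedBall
  have hIeq : I = ENNReal.ofReal (∫ z in ball M R, ‖fderiv ℝ u z‖ ^ 2) :=
    (ofReal_integral_eq_lintegral_ofReal hint2 (ae_of_all _ fun z => by positivity)).symm
  have hfinal : (∫⁻ x in ball M R, ENNReal.ofReal (‖u x‖ ^ 2))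
      ≤ ENNReal.ofReal (2 ^ (n + 2) * R ^ 2 * (R / ρ) ^ (n - 2)
          * (if n = 2 then Real.log (R / ρ) + 1 else 1)) * I :=
    hchain.trans (mul_le_mul_left hAVle I)
  have hLHS : (∫ x in ball M R, ‖u x‖ ^ 2)
      = (∫⁻ x in ball M R, ENNReal.ofReal (‖u x‖ ^ 2)).toReal :=
    integral_eq_lintegral_of_nonneg_ae (ae_of_all _ fun x => by positivity)
      ((hu.continuous.norm.pow 2).aestronglyMeasurable)
  rw [hLHS]
  have hRHSne : ENNReal.ofReal (2 ^ (n + 2) * R ^ 2 * (R / ρ) ^ (n - 2)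
      * (if n = 2 then Real.log (R / ρ) + 1 else 1)) * I ≠ ⊤ := by
    rw [hIeq]
    exact ENNReal.mul_ne_top ENNReal.ofReal_ne_top ENNReal.ofReal_ne_top
  refine le_trans (ENNReal.toReal_mono hRHSne hfinal) ?_
  rw [hIeq, ← ENNReal.ofReal_mul hCC, ENNReal.toReal_ofReal
    (mul_nonneg hCC (integral_nonneg fun z => by positivity))]
end

section
/- Let n ≥ 1, let v : ℝⁿ → ℂ be 4ℤⁿ-periodic (that is, v(x + 4k) = v(x) for all x ∈ ℝⁿ and all k ∈ ℤⁿ) and integrable on the periodicity cell □ = (−2, 2)ⁿ, and let h : ℝⁿ → ℂ be continuously differentiable with compact support. Then there exists a constant C > 0 depending only on n such that for every ε > 0: | ∫_{ℝⁿ} v(x/ε) h(x) dx − 4^{−n} (∫_□ v(ξ) dξ) (∫_{ℝⁿ} h(x) dx) | ≤ C ε (sup_{ℝⁿ} |∇h|) ‖v‖_{L¹(□)} · vol({x ∈ ℝⁿ : dist(x, supp h) ≤ 4√n ε}). -/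
open MeasureTheory Metric

namespace Stmt10Aux

open Measure Set

noncomputable section

variable {n : ℕ}

def Q (n : ℕ) : Set (EuclideanSpace ℝ (Fin n)) := {ξ | ∀ i, ξ i ∈ Set.Ioo (-2:ℝ) 2}

def cell (n : ℕ) (ε : ℝ) (k : Fin n → ℤ) : Set (EuclideanSpace ℝ (Fin n)) :=
  {x | ∀ i, x i ∈ Set.Ioo (4*ε*k i - 2*ε) (4*ε*k i + 2*ε)}

abbrev eqv (n : ℕ) := (MeasurableEquiv.toLp 2 (Fin n → ℝ)).symm

lemma eqv_apply (x : EuclideanSpace ℝ (Fin n)) (i : Fin n) : (eqv n x) i = x i := rfl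

lemma cell_eq_preimage (ε : ℝ) (k : Fin n → ℤ) :
    cell n ε k = (eqv n) ⁻¹' (Set.univ.pi fun i => Set.Ioo (4*ε*k i - 2*ε) (4*ε*k i + 2*ε)) := by
  ext x; simp [cell, Set.mem_pi, eqv_apply]

lemma measurableSet_cell (ε : ℝ) (k : Fin n → ℤ) : MeasurableSet (cell n ε k) := by
  rw [cell_eq_preimage]
  exact (eqv n).measurable (MeasurableSet.univ_pi fun i => measurableSet_Ioo)

lemma measurableSet_Q : MeasurableSet (Q n) := by
  have : Q n = (eqv n) ⁻¹' (Set.univ.pi fun _ => Set.Ioo (-2:ℝ) 2) := by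
    ext x; simp [Q, Set.mem_pi, eqv_apply]
  rw [this]
  exact (eqv n).measurable (MeasurableSet.univ_pi fun i => measurableSet_Ioo)

lemma volume_cell {ε : ℝ} (hε : 0 < ε) (k : Fin n → ℤ) :
    volume (cell n ε k) = ENNReal.ofReal ((4*ε)^n) := by
  rw [cell_eq_preimage]
  rw [(EuclideanSpace.volume_preserving_symm_measurableEquiv_toLp (Fin n)).measure_preimage
    ((MeasurableSet.univ_pi fun i => measurableSet_Ioo).nullMeasurableSet)]
  rw [volume_pi_pi]
  have : ∀ i : Fin n, volume (Set.Ioo (4*ε*k i - 2*ε) (4*ε*k i + 2*ε)) = ENNReal.ofReal (4*ε) := by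
    intro i; rw [Real.volume_Ioo]; ring_nf
  simp only [this, Finset.prod_const, Finset.card_univ, Fintype.card_fin]
  rw [← ENNReal.ofReal_pow (by positivity)]

lemma volume_cell_toReal {ε : ℝ} (hε : 0 < ε) (k : Fin n → ℤ) :
    (volume (cell n ε k)).toReal = (4*ε)^n := by
  rw [volume_cell hε, ENNReal.toReal_ofReal (by positivity)]

lemma cell_disjoint {ε : ℝ} (hε : 0 < ε) : Pairwise (Function.onFun Disjoint (cell n ε)) := by
  intro k k' hkk'
  rw [Function.onFun, Set.disjoint_left]
  rintro x hx hx'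
  apply hkk'
  funext i
  have h1 := hx i
  have h2 := hx' i
  simp only [Set.mem_Ioo] at h1 h2
  have : |(k i : ℝ) - k' i| < 1 := by
    rw [abs_lt]; constructor <;> nlinarith
  have : |(k i - k' i : ℤ)| < 1 := by exact_mod_cast (by push_cast; simpa using this : |((k i - k' i : ℤ) : ℝ)| < 1)
  have := Int.abs_lt_one_iff.mp this
  omega

lemma dist_le_of_mem_cell {ε : ℝ} (hε : 0 < ε) {k : Fin n → ℤ}
    {x y : EuclideanSpace ℝ (Fin n)} (hx : x ∈ cell n ε k) (hy : y ∈ cell n ε k) :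
    dist x y ≤ 4 * Real.sqrt n * ε := by
  rw [EuclideanSpace.dist_eq]
  have hb : ∀ i, dist (x i) (y i) ^ 2 ≤ (4*ε)^2 := by
    intro i
    have h1 := hx i; have h2 := hy i
    simp only [Set.mem_Ioo] at h1 h2
    have hab : |x i - y i| ≤ 4*ε := by rw [abs_le]; constructor <;> nlinarith
    rw [Real.dist_eq]
    exact pow_le_pow_left₀ (abs_nonneg _) hab 2
  calc Real.sqrt (∑ i, dist (x i) (y i) ^ 2) ≤ Real.sqrt (∑ _i : Fin n, (4*ε)^2) := by
        apply Real.sqrt_le_sqrt; exact Finset.sum_le_sum fun i _ => hb i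
    _ = Real.sqrt (n * (4*ε)^2) := by rw [Finset.sum_const, Finset.card_univ, Fintype.card_fin,
        nsmul_eq_mul]
    _ = Real.sqrt n * (4*ε) := by
        rw [Real.sqrt_mul (by positivity), Real.sqrt_sq (by positivity)]
    _ = 4 * Real.sqrt n * ε := by ring

lemma volume_coord_eq (i : Fin n) (c : ℝ) :
    volume {x : EuclideanSpace ℝ (Fin n) | x i = c} = 0 := by
  have hset : {x : EuclideanSpace ℝ (Fin n) | x i = c}
      = (eqv n) ⁻¹' ((Function.eval i) ⁻¹' {c}) := by
    ext x; simp [Function.eval]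
  rw [hset, (EuclideanSpace.volume_preserving_symm_measurableEquiv_toLp (Fin n)).measure_preimage
    (((measurable_pi_apply i) (measurableSet_singleton c)).nullMeasurableSet)]
  have hsub : (Function.eval i : (Fin n → ℝ) → ℝ) ⁻¹' {c}
      ⊆ Set.univ.pi (fun j => if j = i then ({c} : Set ℝ) else Set.univ) := by
    intro f hf j _
    by_cases hj : j = i
    · subst hj; simp_all [Function.eval]
    · simp [hj]
  refine le_antisymm (le_trans (measure_mono hsub) ?_) zero_le
  rw [volume_pi_pi]
  apply le_of_eq
  apply Finset.prod_eq_zero (Finset.mem_univ i)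
  simp

lemma one_dim' {ε t : ℝ} (hε : 0 < ε) (hne : (⌊t⌋:ℝ) ≠ t) :
    4*ε*⌊t⌋ - 2*ε < (t-1/2)*(4*ε) ∧ (t-1/2)*(4*ε) < 4*ε*⌊t⌋ + 2*ε := by
  have h1' : (⌊t⌋:ℝ) < t := lt_of_le_of_ne (Int.floor_le t) hne
  have h2 : t < ⌊t⌋+1 := Int.lt_floor_add_one t
  constructor <;> nlinarith

lemma compl_iUnion_cell_null {ε : ℝ} (hε : 0 < ε) :
    volume (⋃ k : Fin n → ℤ, cell n ε k)ᶜ = 0 := by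
  have hsub : (⋃ k : Fin n → ℤ, cell n ε k)ᶜ ⊆
      ⋃ i : Fin n, ⋃ m : ℤ, {x : EuclideanSpace ℝ (Fin n) | x i = ε*(4*m-2)} := by
    intro x hx
    by_contra hc
    simp only [Set.mem_iUnion, Set.mem_setOf_eq, not_exists] at hc
    apply hx
    refine Set.mem_iUnion.mpr ⟨fun i => ⌊x i/(4*ε) + 1/2⌋, fun i => ?_⟩
    have key : x i = (x i/(4*ε) + 1/2 - 1/2)*(4*ε) := by field_simp; ring
    have hne : (⌊x i/(4*ε) + 1/2⌋ : ℝ) ≠ x i/(4*ε) + 1/2 := by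
      intro heq
      apply hc i ⌊x i/(4*ε) + 1/2⌋
      rw [heq]
      field_simp
      ring
    obtain ⟨L, R⟩ := one_dim' (t := x i/(4*ε) + 1/2) hε hne
    show x i ∈ Set.Ioo (4*ε*(⌊x i/(4*ε) + 1/2⌋:ℝ) - 2*ε) (4*ε*(⌊x i/(4*ε) + 1/2⌋:ℝ) + 2*ε)
    rw [Set.mem_Ioo]
    exact ⟨by linarith, by linarith⟩
  refine le_antisymm (le_trans (measure_mono hsub) ?_) zero_le
  apply le_of_eq
  refine measure_iUnion_null fun i => measure_iUnion_null fun m => volume_coord_eq i _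

def kv (k : Fin n → ℤ) : EuclideanSpace ℝ (Fin n) := WithLp.toLp 2 (fun i => 4*(k i : ℝ))

lemma mem_cell_iff {ε : ℝ} (hε : 0 < ε) (k : Fin n → ℤ) (x : EuclideanSpace ℝ (Fin n)) :
    x ∈ cell n ε k ↔ ε⁻¹ • x - kv k ∈ Q n := by
  have key : ∀ i, ((ε⁻¹ • x - kv k) i = ε⁻¹ * x i - 4 * k i) := fun i => rfl
  have e1 : ∀ i : Fin n, ε⁻¹ * (4*ε*(k i:ℝ)) = 4*(k i:ℝ) := by
    intro i; field_simp
  have e2 : ε⁻¹ * (2*ε) = 2 := by field_simp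
  constructor
  · intro hx i
    have h := hx i
    simp only [Set.mem_Ioo] at h ⊢
    rw [key i]
    constructor
    · nlinarith [mul_pos (inv_pos.mpr hε) (sub_pos.mpr h.1), e1 i, e2]
    · nlinarith [mul_pos (inv_pos.mpr hε) (sub_pos.mpr h.2), e1 i, e2]
  · intro hx i
    have h := hx i
    rw [key i] at h
    simp only [Set.mem_Ioo] at h ⊢
    have f1 : ε * (ε⁻¹ * x i) = x i := by field_simp
    constructor
    · nlinarith [mul_pos hε (sub_pos.mpr h.1), f1]
    · nlinarith [mul_pos hε (sub_pos.mpr h.2), f1]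

variable {F : Type*} [NormedAddCommGroup F] [NormedSpace ℝ F]

lemma indicator_cell_eq {ε : ℝ} (hε : 0 < ε) (k : Fin n → ℤ)
    (w : EuclideanSpace ℝ (Fin n) → F)
    (hper : ∀ x : EuclideanSpace ℝ (Fin n), w (WithLp.toLp 2 (fun i => x i + 4*(k i:ℝ))) = w x) :
    (cell n ε k).indicator (fun x => w (ε⁻¹ • x))
      = fun x => (Q n).indicator w (ε⁻¹ • x - kv k) := by
  funext x
  by_cases hx : x ∈ cell n ε k
  · rw [Set.indicator_of_mem hx, Set.indicator_of_mem ((mem_cell_iff hε k x).mp hx)]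
    have : w (ε⁻¹ • x) = w (WithLp.toLp 2 (fun i => (ε⁻¹ • x - kv k) i + 4*(k i:ℝ))) := by
      congr 1
      ext i
      show (ε⁻¹ • x) i = (ε⁻¹ • x) i - 4*(k i:ℝ) + 4*(k i:ℝ)
      ring
    rw [this, hper]
  · rw [Set.indicator_of_notMem hx,
      Set.indicator_of_notMem (fun hm => hx ((mem_cell_iff hε k x).mpr hm))]

lemma cell_transform [CompleteSpace F] {ε : ℝ} (hε : 0 < ε) (k : Fin n → ℤ)
    (w : EuclideanSpace ℝ (Fin n) → F)
    (hper : ∀ x : EuclideanSpace ℝ (Fin n), w (WithLp.toLp 2 (fun i => x i + 4*(k i:ℝ))) = w x)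
    (hw : IntegrableOn w (Q n)) :
    IntegrableOn (fun x => w (ε⁻¹ • x)) (cell n ε k) ∧
      ∫ x in cell n ε k, w (ε⁻¹ • x) = (ε^n) • ∫ ξ in Q n, w ξ := by
  set W := (Q n).indicator w with hW
  have hWint : Integrable W := by
    rwa [hW, integrable_indicator_iff measurableSet_Q]
  set G : EuclideanSpace ℝ (Fin n) → F := fun y => W (y - kv k) with hG
  have hGW : G = fun y => W (y + (-(kv k))) := by funext y; rw [hG]; simp [sub_eq_add_neg]
  have hGint : Integrable G := by
    rw [hGW]
    have := (measurePreserving_add_right (volume : Measure (EuclideanSpace ℝ (Fin n)))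
      (-(kv k))).integrable_comp_emb (MeasurableEquiv.addRight (-(kv k))).measurableEmbedding
      (g := W)
    exact this.mpr hWint
  have hind := indicator_cell_eq hε k w hper
  have hcomp : (cell n ε k).indicator (fun x => w (ε⁻¹ • x)) = fun x => G (ε⁻¹ • x) := hind
  constructor
  · rw [← integrable_indicator_iff (measurableSet_cell ε k), hcomp]
    exact (integrable_comp_smul_iff volume G (inv_ne_zero hε.ne')).mpr hGint
  · rw [← integral_indicator (measurableSet_cell ε k), hcomp]
    have h1 : ∫ x, G (ε⁻¹ • x) = |ε ^ Module.finrank ℝ (EuclideanSpace ℝ (Fin n))| • ∫ y, G y :=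
      Measure.integral_comp_inv_smul volume G ε
    rw [h1, finrank_euclideanSpace_fin, abs_of_nonneg (pow_nonneg hε.le n)]
    congr 1
    rw [hGW]
    rw [integral_add_right_eq_self W (-(kv k))]
    rw [hW, integral_indicator measurableSet_Q]

lemma lip_bound (h : EuclideanSpace ℝ (Fin n) → ℂ) (hh : ContDiff ℝ 1 h)
    (hsupp : HasCompactSupport h) (x y : EuclideanSpace ℝ (Fin n)) :
    ‖h x - h y‖ ≤ (⨆ z, ‖fderiv ℝ h z‖) * ‖x - y‖ := by
  have hb : BddAbove (Set.range fun z => ‖fderiv ℝ h z‖) :=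
    ((hh.continuous_fderiv one_ne_zero).norm).bddAbove_range_of_hasCompactSupport
      (hsupp.fderiv (𝕜 := ℝ)).norm
  exact convex_univ.norm_image_sub_le_of_norm_fderiv_le
    (fun z _ => hh.differentiable one_ne_zero z)
    (fun z _ => le_ciSup hb z) trivial trivial

lemma M_nonneg (h : EuclideanSpace ℝ (Fin n) → ℂ) :
    0 ≤ ⨆ z, ‖fderiv ℝ h z‖ :=
  Real.iSup_nonneg fun _ => norm_nonneg _

lemma prod_integrableOn {ε : ℝ} (hε : 0 < ε) (k : Fin n → ℤ)
    (v : EuclideanSpace ℝ (Fin n) → ℂ)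
    (hper : ∀ (x : EuclideanSpace ℝ (Fin n)) (k : Fin n → ℤ),
      v (WithLp.toLp 2 (fun i => x i + 4 * (k i : ℝ))) = v x)
    (hv : IntegrableOn v (Q n))
    (h : EuclideanSpace ℝ (Fin n) → ℂ) (hh : ContDiff ℝ 1 h) (hsupp : HasCompactSupport h) :
    IntegrableOn (fun x => v (ε⁻¹ • x) * h x) (cell n ε k) := by
  have hgvI := (cell_transform hε k v (fun x => hper x k) hv).1
  have hflip : Integrable (fun x => h x * v (ε⁻¹ • x)) (volume.restrict (cell n ε k)) :=
    hgvI.bdd_mul (hh.continuous.aestronglyMeasurable.restrict)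
      (ae_of_all _ (hh.continuous.bounded_above_of_compact_support hsupp).choose_spec)
  simpa [mul_comm, IntegrableOn] using hflip

lemma cell_est (hn : 1 ≤ n) {ε : ℝ} (hε : 0 < ε)
    (v : EuclideanSpace ℝ (Fin n) → ℂ)
    (hper : ∀ (x : EuclideanSpace ℝ (Fin n)) (k : Fin n → ℤ),
      v (WithLp.toLp 2 (fun i => x i + 4 * (k i : ℝ))) = v x)
    (hv : IntegrableOn v (Q n))
    (h : EuclideanSpace ℝ (Fin n) → ℂ) (hh : ContDiff ℝ 1 h) (hsupp : HasCompactSupport h)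
    (k : Fin n → ℤ) :
    ‖(∫ x in cell n ε k, v (ε⁻¹ • x) * h x) -
        ((4:ℂ)^n)⁻¹ * (∫ ξ in Q n, v ξ) * ∫ x in cell n ε k, h x‖
      ≤ (ε^n * ∫ ξ in Q n, ‖v ξ‖) *
          (4 * Real.sqrt n * ε * (⨆ z, ‖fderiv ℝ h z‖)) := by
  set M := ⨆ z, ‖fderiv ℝ h z‖ with hM
  have hM0 : 0 ≤ M := M_nonneg h
  obtain ⟨hgvI, hgvE⟩ := cell_transform hε k v (fun x => hper x k) hv
  obtain ⟨hnvI, hnvE⟩ := cell_transform hε k (fun ξ => ‖v ξ‖)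
    (fun x => by simp only []; rw [hper x k]) hv.norm
  have hhint : Integrable h := hh.continuous.integrable_of_hasCompactSupport hsupp
  have hprod := prod_integrableOn hε k v hper hv h hh hsupp
  have hvolc : (volume (cell n ε k)).toReal = (4*ε)^n := volume_cell_toReal hε k
  have hvol_lt : volume (cell n ε k) < ⊤ := by
    rw [volume_cell hε]; exact ENNReal.ofReal_lt_top
  have h4εpos : (0:ℝ) < (4*ε)^n := by positivity
  set c : ℂ := (((4*ε)^n)⁻¹ : ℝ) • ∫ x in cell n ε k, h x with hc
  have hMx : ∀ x ∈ cell n ε k, ‖h x - c‖ ≤ 4 * Real.sqrt n * ε * M := by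
    intro x hx
    have h1 : ∫ y in cell n ε k, (h x - h y)
        = ((volume (cell n ε k)).toReal : ℝ) • h x - ∫ y in cell n ε k, h y := by
      rw [integral_sub (integrableOn_const (C := h x) hvol_lt.ne) hhint.integrableOn,
        setIntegral_const, measureReal_def]
    have h2 : ‖∫ y in cell n ε k, (h x - h y)‖
        ≤ (4 * Real.sqrt n * ε * M) * (volume (cell n ε k)).toReal := by
      apply norm_setIntegral_le_of_norm_le_const hvol_lt
      · intro y hy
        calc ‖h x - h y‖ ≤ M * ‖x - y‖ := lip_bound h hh hsupp x y
        _ ≤ M * (4 * Real.sqrt n * ε) := by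
            apply mul_le_mul_of_nonneg_left _ hM0
            rw [← dist_eq_norm]
            exact dist_le_of_mem_cell hε hx hy
        _ = 4 * Real.sqrt n * ε * M := by ring
    have hxc : h x - c = (((4*ε)^n)⁻¹ : ℝ) • (∫ y in cell n ε k, (h x - h y)) := by
      rw [h1, smul_sub, hvolc, smul_smul, inv_mul_cancel₀ h4εpos.ne', one_smul, hc]
    rw [hxc, norm_smul, Real.norm_eq_abs, abs_of_nonneg (inv_nonneg.mpr h4εpos.le)]
    calc ((4*ε)^n)⁻¹ * ‖∫ y in cell n ε k, (h x - h y)‖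
        ≤ ((4*ε)^n)⁻¹ * ((4 * Real.sqrt n * ε * M) * (volume (cell n ε k)).toReal) := by
          exact mul_le_mul_of_nonneg_left h2 (inv_nonneg.mpr h4εpos.le)
      _ = 4 * Real.sqrt n * ε * M := by rw [hvolc]; field_simp
  have key : ((4:ℂ)^n)⁻¹ * (∫ ξ in Q n, v ξ) * (∫ x in cell n ε k, h x)
      = ∫ x in cell n ε k, v (ε⁻¹ • x) * c := by
    rw [integral_mul_const, hgvE, hc]
    rw [Complex.real_smul, Complex.real_smul]
    push_cast
    have hε0 : (ε:ℂ) ≠ 0 := by exact_mod_cast hε.ne'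
    field_simp
    ring
  rw [key, ← integral_sub hprod (hgvI.mul_const c)]
  have step1 : ‖∫ x in cell n ε k, (v (ε⁻¹ • x) * h x - v (ε⁻¹ • x) * c)‖
      ≤ ∫ x in cell n ε k, ‖v (ε⁻¹ • x)‖ * (4 * Real.sqrt n * ε * M) := by
    apply norm_integral_le_of_norm_le (hnvI.mul_const _)
    rw [ae_restrict_iff' (measurableSet_cell ε k)]
    filter_upwards with x
    intro hx
    rw [← mul_sub, norm_mul]
    exact mul_le_mul_of_nonneg_left (hMx x hx) (norm_nonneg _)
  calc ‖∫ x in cell n ε k, (v (ε⁻¹ • x) * h x - v (ε⁻¹ • x) * c)‖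
      ≤ ∫ x in cell n ε k, ‖v (ε⁻¹ • x)‖ * (4 * Real.sqrt n * ε * M) := step1
    _ = (∫ x in cell n ε k, ‖v (ε⁻¹ • x)‖) * (4 * Real.sqrt n * ε * M) := by
        rw [integral_mul_const]
    _ = (ε^n * ∫ ξ in Q n, ‖v ξ‖) * (4 * Real.sqrt n * ε * M) := by
        rw [hnvE, smul_eq_mul]

lemma abs_coord_le_norm (x : EuclideanSpace ℝ (Fin n)) (i : Fin n) : |x i| ≤ ‖x‖ := by
  rw [EuclideanSpace.norm_eq]
  rw [← Real.sqrt_sq_eq_abs]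
  apply Real.sqrt_le_sqrt
  have : |x i|^2 ≤ ∑ j, ‖x j‖^2 := by
    have := Finset.single_le_sum (f := fun j => ‖x j‖^2) (fun j _ => by positivity)
      (Finset.mem_univ i)
    simpa [Real.norm_eq_abs, sq_abs] using this
  simpa [sq_abs] using this

end
end Stmt10Aux

open Stmt10Aux

/-- Lemma 3.5: two-scale averaging of a 4ℤⁿ-periodic rapidly oscillating factor
against a slowly varying compactly supported test function. -/
theorem stmt10 (n : ℕ) (hn : 1 ≤ n) :
    ∃ C : ℝ, 0 < C ∧
      ∀ v : EuclideanSpace ℝ (Fin n) → ℂ,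
        (∀ (x : EuclideanSpace ℝ (Fin n)) (k : Fin n → ℤ),
          v (WithLp.toLp 2 (fun i => x i + 4 * (k i : ℝ))) = v x) →
        IntegrableOn v {ξ : EuclideanSpace ℝ (Fin n) | ∀ i, ξ i ∈ Set.Ioo (-2 : ℝ) 2} →
        ∀ h : EuclideanSpace ℝ (Fin n) → ℂ, ContDiff ℝ 1 h → HasCompactSupport h →
          ∀ ε : ℝ, 0 < ε →
            ‖(∫ x, v (ε⁻¹ • x) * h x) -
                ((4 : ℂ) ^ n)⁻¹ *
                  (∫ ξ in {ξ : EuclideanSpace ℝ (Fin n) | ∀ i, ξ i ∈ Set.Ioo (-2 : ℝ) 2}, v ξ) *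
                  (∫ x, h x)‖ ≤
              C * ε * (⨆ x, ‖fderiv ℝ h x‖) *
                (∫ ξ in {ξ : EuclideanSpace ℝ (Fin n) | ∀ i, ξ i ∈ Set.Ioo (-2 : ℝ) 2}, ‖v ξ‖) *
                (volume {x : EuclideanSpace ℝ (Fin n) |
                  Metric.infDist x (tsupport h) ≤ 4 * Real.sqrt n * ε}).toReal := by
  classical
  have hn0 : (0:ℝ) < n := by exact_mod_cast hn
  have hsq : 0 < Real.sqrt n := Real.sqrt_pos.mpr hn0
  refine ⟨4 * Real.sqrt n, by positivity, ?_⟩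
  intro v hper hv h hh hsupp ε hε
  have hQdef : {ξ : EuclideanSpace ℝ (Fin n) | ∀ i, ξ i ∈ Set.Ioo (-2:ℝ) 2} = Q n := rfl
  rw [hQdef] at hv ⊢
  set M := ⨆ x, ‖fderiv ℝ h x‖ with hM
  have hM0 : 0 ≤ M := M_nonneg h
  set A := ∫ ξ in Q n, v ξ with hA
  set Nv := ∫ ξ in Q n, ‖v ξ‖ with hNv
  have hNv0 : 0 ≤ Nv := setIntegral_nonneg measurableSet_Q fun _ _ => norm_nonneg _
  set T := tsupport h with hT
  set r := 4 * Real.sqrt n * ε with hr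
  have hr0 : 0 ≤ r := by positivity
  set NN := {x : EuclideanSpace ℝ (Fin n) | Metric.infDist x T ≤ r} with hNN
  by_cases hTE : T = ∅
  · -- h is identically zero
    have hzero : ∀ x, h x = 0 := fun x =>
      image_eq_zero_of_notMem_tsupport (by rw [← hT, hTE]; exact Set.notMem_empty x)
    have e1 : (fun x => v (ε⁻¹ • x) * h x) = fun _ => (0:ℂ) := by
      funext x; rw [hzero, mul_zero]
    have e2 : ∫ x, h x = 0 := by
      have : h = fun _ => (0:ℂ) := funext hzero
      rw [this, integral_zero]
    rw [e1, e2, integral_zero, mul_zero, sub_zero, norm_zero]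
    exact mul_nonneg (mul_nonneg (mul_nonneg hr0 hM0) hNv0) ENNReal.toReal_nonneg
  · have hTne : T.Nonempty := Set.nonempty_iff_ne_empty.mpr hTE
    have hTcomp : IsCompact T := hsupp
    have hhint : Integrable h := hh.continuous.integrable_of_hasCompactSupport hsupp
    -- finiteness of volume NN
    have hNsub : NN ⊆ Metric.cthickening r T := by
      intro x hx
      rw [Metric.mem_cthickening_iff,
        ENNReal.le_ofReal_iff_toReal_le (Metric.infEdist_ne_top hTne) hr0]
      exact hx
    have hNfin : volume NN < ⊤ :=
      lt_of_le_of_lt (measure_mono hNsub) (hTcomp.cthickening).measure_lt_top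
    -- the set of relevant cells is finite
    obtain ⟨R, hR0, hRT⟩ : ∃ R, 0 ≤ R ∧ T ⊆ Metric.closedBall 0 R := by
      obtain ⟨R, hRT⟩ := hTcomp.isBounded.subset_closedBall 0
      exact ⟨max R 0, le_max_right _ _,
        hRT.trans (Metric.closedBall_subset_closedBall (le_max_left _ _))⟩
    set B : ℤ := ⌈(R + 2*ε)/(4*ε)⌉ with hB
    have hSfin : {k : Fin n → ℤ | (cell n ε k ∩ T).Nonempty}.Finite := by
      apply Set.Finite.subset (Set.Finite.pi (fun _ : Fin n => Set.finite_Icc (-B) B))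
      rintro k ⟨x, hxc, hxT⟩
      intro i _
      have hxi : |x i| ≤ R := by
        have := hRT hxT
        rw [Metric.mem_closedBall, dist_zero_right] at this
        exact (abs_coord_le_norm x i).trans this
      have hcc := hxc i
      rw [Set.mem_Ioo] at hcc
      have habs : |4*ε*(k i:ℝ)| ≤ R + 2*ε := by
        rw [abs_le]
        rw [abs_le] at hxi
        constructor <;> nlinarith
      have hki : |(k i : ℝ)| ≤ (R + 2*ε)/(4*ε) := by
        rw [le_div_iff₀ (by positivity)]
        calc |(k i:ℝ)| * (4*ε) = |4*ε*(k i:ℝ)| := by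
              rw [abs_mul, abs_of_nonneg (by positivity : (0:ℝ) ≤ 4*ε)]; ring
          _ ≤ R + 2*ε := habs
      have hkB : |(k i : ℝ)| ≤ (B : ℝ) := hki.trans (Int.le_ceil _)
      have : |k i| ≤ B := by exact_mod_cast (by rwa [← Int.cast_abs] at hkB : ((|k i| : ℤ) : ℝ) ≤ (B:ℝ))
      rw [Set.mem_Icc]
      rw [abs_le] at this
      exact this
    -- integrability of the product
    set f : EuclideanSpace ℝ (Fin n) → ℂ := fun x => v (ε⁻¹ • x) * h x with hf
    have hsupp_f : Function.support f ⊆ T := by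
      intro x hx
      by_contra hxT
      apply hx
      show f x = 0
      rw [hf]
      simp only []
      rw [image_eq_zero_of_notMem_tsupport hxT, mul_zero]
    have hTsub : T ⊆ (⋃ k ∈ hSfin.toFinset, cell n ε k) ∪
        (⋃ k : Fin n → ℤ, cell n ε k)ᶜ := by
      intro x hxT
      by_cases hxU : x ∈ ⋃ k : Fin n → ℤ, cell n ε k
      · obtain ⟨k, hk⟩ := Set.mem_iUnion.mp hxU
        exact Or.inl (Set.mem_biUnion (hSfin.mem_toFinset.mpr ⟨x, hk, hxT⟩) hk)
      · exact Or.inr hxU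
    have hfT : IntegrableOn f T := by
      apply IntegrableOn.mono_set _ hTsub
      apply IntegrableOn.union
      · rw [integrableOn_finset_iUnion]
        exact fun k _ => prod_integrableOn hε k v hper hv h hh hsupp
      · rw [IntegrableOn, Measure.restrict_eq_zero.mpr (compl_iUnion_cell_null hε)]
        exact integrable_zero_measure
    have hfint : Integrable f := by
      rw [← Set.indicator_eq_self.mpr hsupp_f]
      rwa [integrable_indicator_iff (isClosed_tsupport h).measurableSet]
    -- decomposition as sums over cells
    have hrestr : volume.restrict (⋃ k : Fin n → ℤ, cell n ε k) =
        (volume : Measure (EuclideanSpace ℝ (Fin n))) :=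
      Measure.restrict_eq_self_of_ae_mem (mem_ae_iff.mpr (compl_iUnion_cell_null hε))
    have hIU : ∀ g : EuclideanSpace ℝ (Fin n) → ℂ, Integrable g →
        HasSum (fun k => ∫ x in cell n ε k, g x) (∫ x, g x) := by
      intro g hg
      have := hasSum_integral_iUnion (f := g) (fun k => measurableSet_cell ε k)
        (cell_disjoint hε) (hg.integrableOn)
      rwa [show (∫ x in ⋃ k : Fin n → ℤ, cell n ε k, g x) = ∫ x, g x by rw [hrestr]] at this
    have hHS1 := hIU f hfint
    have hHS2 := (hIU h hhint).mul_left (((4:ℂ)^n)⁻¹ * A)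
    set D : (Fin n → ℤ) → ℂ := fun k =>
      (∫ x in cell n ε k, f x) - ((4:ℂ)^n)⁻¹ * A * ∫ x in cell n ε k, h x with hD
    have hHSD : HasSum D ((∫ x, f x) - ((4:ℂ)^n)⁻¹ * A * ∫ x, h x) := hHS1.sub hHS2
    set b : (Fin n → ℤ) → ℝ := fun k =>
      if (cell n ε k ∩ T).Nonempty then (ε^n * Nv) * (4 * Real.sqrt n * ε * M) else 0 with hb
    have hDb : ∀ k, ‖D k‖ ≤ b k := by
      intro k
      by_cases hk : (cell n ε k ∩ T).Nonempty
      · rw [hb]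
        simp only [if_pos hk]
        exact cell_est hn hε v hper hv h hh hsupp k
      · rw [hb]
        simp only [if_neg hk]
        have hzero : ∀ x ∈ cell n ε k, h x = 0 := fun x hx =>
          image_eq_zero_of_notMem_tsupport (fun hxT => hk ⟨x, hx, hxT⟩)
        have e1 : ∫ x in cell n ε k, f x = 0 :=
          setIntegral_eq_zero_of_forall_eq_zero fun x hx => by
            rw [hf]; simp only []; rw [hzero x hx, mul_zero]
        have e2 : ∫ x in cell n ε k, h x = 0 :=
          setIntegral_eq_zero_of_forall_eq_zero hzero
        rw [hD]
        simp only [e1, e2, mul_zero, sub_zero, norm_zero]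
        exact le_refl 0
    have hbS : Summable b := by
      apply summable_of_ne_finset_zero (s := hSfin.toFinset)
      intro k hk
      rw [hb]
      exact if_neg (by simpa [hSfin.mem_toFinset] using hk)
    have hDS : Summable fun k => ‖D k‖ :=
      Summable.of_nonneg_of_le (fun _ => norm_nonneg _) hDb hbS
    -- cells meeting T are inside NN
    have hsubN : ∀ k ∈ hSfin.toFinset, cell n ε k ⊆ NN := by
      intro k hk x hx
      obtain ⟨z, hzc, hzT⟩ := hSfin.mem_toFinset.mp hk
      show Metric.infDist x T ≤ r
      exact (Metric.infDist_le_dist_of_mem hzT).trans (dist_le_of_mem_cell hε hx hzc)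
    have hcount : ∑ k ∈ hSfin.toFinset, (volume (cell n ε k)).toReal ≤ (volume NN).toReal := by
      have h1 : volume (⋃ k ∈ hSfin.toFinset, cell n ε k)
          = ∑ k ∈ hSfin.toFinset, volume (cell n ε k) :=
        measure_biUnion_finset ((cell_disjoint hε).set_pairwise _)
          (fun k _ => measurableSet_cell ε k)
      have h2 : volume (⋃ k ∈ hSfin.toFinset, cell n ε k) ≤ volume NN :=
        measure_mono (Set.iUnion₂_subset hsubN)
      have h3 : (∑ k ∈ hSfin.toFinset, volume (cell n ε k)).toReal
          = ∑ k ∈ hSfin.toFinset, (volume (cell n ε k)).toReal :=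
        ENNReal.toReal_sum fun k _ => by rw [volume_cell hε]; exact ENNReal.ofReal_ne_top
      rw [← h3, ← h1]
      exact ENNReal.toReal_mono hNfin.ne h2
    -- final chain
    calc ‖(∫ x, f x) - ((4:ℂ)^n)⁻¹ * A * ∫ x, h x‖
        = ‖∑' k, D k‖ := by rw [hHSD.tsum_eq]
      _ ≤ ∑' k, ‖D k‖ := norm_tsum_le_tsum_norm hDS
      _ ≤ ∑' k, b k := Summable.tsum_le_tsum hDb hDS hbS
      _ = ∑ k ∈ hSfin.toFinset, b k := tsum_eq_sum (fun k hk => by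
          rw [hb]; exact if_neg (by simpa [hSfin.mem_toFinset] using hk))
      _ = ∑ k ∈ hSfin.toFinset,
            ((4:ℝ)⁻¹^n * Nv * (4 * Real.sqrt n * ε * M)) * (volume (cell n ε k)).toReal := by
          apply Finset.sum_congr rfl
          intro k hk
          have hkm : (cell n ε k ∩ T).Nonempty := hSfin.mem_toFinset.mp hk
          simp only [hb]
          rw [if_pos hkm, volume_cell_toReal hε, mul_pow, inv_pow]
          have h4 : (4:ℝ)^n ≠ 0 := by positivity
          field_simp
      _ = ((4:ℝ)⁻¹^n * Nv * (4 * Real.sqrt n * ε * M)) *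
            ∑ k ∈ hSfin.toFinset, (volume (cell n ε k)).toReal := by
          rw [Finset.mul_sum]
      _ ≤ ((4:ℝ)⁻¹^n * Nv * (4 * Real.sqrt n * ε * M)) * (volume NN).toReal := by
          apply mul_le_mul_of_nonneg_left hcount
          positivity
      _ = (4:ℝ)⁻¹^n * (4 * Real.sqrt n * ε * M * Nv * (volume NN).toReal) := by ring
      _ ≤ 1 * (4 * Real.sqrt n * ε * M * Nv * (volume NN).toReal) := by
          apply mul_le_mul_of_nonneg_right (pow_le_one₀ (by norm_num) (by norm_num))
          have hX : (0:ℝ) ≤ (volume NN).toReal := ENNReal.toReal_nonneg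
          have : (0:ℝ) ≤ 4 * Real.sqrt n * ε * M * Nv :=
            mul_nonneg (mul_nonneg (by positivity) hM0) hNv0
          exact mul_nonneg this hX
      _ = 4 * Real.sqrt n * ε * M * Nv * (volume NN).toReal := one_mul _
end
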